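/- Let W be column stochastic with right eigenvector π (positive entries, sum 1), W^∞ = π1ₙᵀ, and ρ = |||W - W^∞|||_π < 1. Suppose w^α is a fixed point of T_α (defined by T_α(w)ₖ = ΣⱼWₖⱼ(wⱼ - α∇fⱼ(wⱼ/(nπⱼ)))). Then ‖w^α - (W^∞⊗I_d)w^α‖_{π⊗1_d} ≤ (αρ/(1-ρ))·‖∇F(w^α/(nπ))‖_{π⊗1_d}. -/

import Mathlib

private lemma pilp_norm_sqrt {n : ℕ} {E : Type*} [NormedAddCommGroup E]
    (x : PiLp 2 (fun _ : Fin n => E)) :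
    ‖x‖ = Real.sqrt (∑ k, ‖x k‖ ^ 2) := by
  rw [PiLp.norm_eq_sum (by norm_num : 0 < (2 : ENNReal).toReal), Real.sqrt_eq_rpow]
  norm_num [Real.rpow_two]

theorem stmt_19 {n d : ℕ} (hn : 0 < n)
    (f : Fin n → EuclideanSpace ℝ (Fin d) → ℝ)
    (W : Matrix (Fin n) (Fin n) ℝ) (π : Fin n → ℝ) (ρ α : ℝ)
    (wα : Fin n → EuclideanSpace ℝ (Fin d))
    (hdiff : ∀ j, Differentiable ℝ (f j))
    (hW_nonneg : ∀ i j, 0 ≤ W i j)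
    (hW_col : ∀ j, ∑ k, W k j = 1)
    (hπ_pos : ∀ k, 0 < π k)
    (hπ_sum : ∑ k, π k = 1)
    (hπ_eig : ∀ k, ∑ j, W k j * π j = π k)
    (hρ0 : 0 ≤ ρ) (hρ1 : ρ < 1)
    (hρ_op : ∀ x : Fin n → EuclideanSpace ℝ (Fin d),
      Real.sqrt (∑ k, (1 / π k) * ‖∑ j, (W k j - π k) • x j‖ ^ 2) ≤
        ρ * Real.sqrt (∑ k, (1 / π k) * ‖x k‖ ^ 2))
    (hα : 0 < α)
    (hfix : ∀ k, wα k = ∑ j, W k j • (wα j - α • gradient (f j) ((1 / (n * π j)) • wα j))) :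
    Real.sqrt (∑ k, (1 / π k) * ‖wα k - π k • ∑ j, wα j‖ ^ 2) ≤
      (α * ρ / (1 - ρ)) *
        Real.sqrt (∑ k, (1 / π k) * ‖gradient (f k) ((1 / (n * π k)) • wα k)‖ ^ 2) := by
  set g : Fin n → EuclideanSpace ℝ (Fin d) :=
    fun j => gradient (f j) ((1 / (n * π j)) • wα j) with hg
  set T : EuclideanSpace ℝ (Fin d) := ∑ j, wα j with hT
  -- gradients sum to zero at the fixed point
  have hsum : ∑ j, g j = 0 := by
    have h1 : T = ∑ j, (wα j - α • g j) := by
      calc T = ∑ k, ∑ j, W k j • (wα j - α • g j) :=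
            Finset.sum_congr rfl (fun k _ => hfix k)
        _ = ∑ j, ∑ k, W k j • (wα j - α • g j) := Finset.sum_comm
        _ = ∑ j, (∑ k, W k j) • (wα j - α • g j) :=
            Finset.sum_congr rfl (fun j _ => (Finset.sum_smul).symm)
        _ = ∑ j, (wα j - α • g j) :=
            Finset.sum_congr rfl (fun j _ => by rw [hW_col j, one_smul])
    have h2 : ∑ j, (wα j - α • g j) = T - α • ∑ j, g j := by
      rw [Finset.sum_sub_distrib, ← Finset.smul_sum, hT]
    have h3 : α • ∑ j, g j = 0 := by
      have h := h1.trans h2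
      have := sub_eq_self.mp h.symm
      exact this
    rcases smul_eq_zero.mp h3 with h | h
    · exact absurd h (ne_of_gt hα)
    · exact h
  set y : Fin n → EuclideanSpace ℝ (Fin d) := fun k => wα k - π k • T with hy
  -- key identity
  have hid : ∀ k, ∑ j, (W k j - π k) • (y j - α • g j) = y k := by
    intro k
    have e1 : ∀ j, y j - α • g j = (wα j - α • g j) - π j • T := by
      intro j; simp only [hy]; abel
    calc ∑ j, (W k j - π k) • (y j - α • g j)
        = ∑ j, ((W k j - π k) • (wα j - α • g j) - ((W k j - π k) * π j) • T) := by
          refine Finset.sum_congr rfl (fun j _ => ?_)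
          rw [e1 j, smul_sub, mul_smul]
      _ = (∑ j, (W k j - π k) • (wα j - α • g j)) - (∑ j, (W k j - π k) * π j) • T := by
          rw [Finset.sum_sub_distrib, Finset.sum_smul]
      _ = (∑ j, (W k j - π k) • (wα j - α • g j)) := by
          have h0 : ∑ j, (W k j - π k) * π j = 0 := by
            simp only [sub_mul, Finset.sum_sub_distrib, hπ_eig k, ← Finset.mul_sum, hπ_sum]
            ring
          rw [h0, zero_smul, sub_zero]
      _ = (∑ j, W k j • (wα j - α • g j)) - π k • ∑ j, (wα j - α • g j) := by
          simp only [sub_smul, Finset.sum_sub_distrib, ← Finset.smul_sum]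
      _ = wα k - π k • T := by
          rw [← hfix k, Finset.sum_sub_distrib, ← Finset.smul_sum, hsum, smul_zero, sub_zero, hT]
      _ = y k := rfl
  -- realize the weighted norm as the PiLp 2 norm
  set Φ : (Fin n → EuclideanSpace ℝ (Fin d)) →
      PiLp 2 (fun _ : Fin n => EuclideanSpace ℝ (Fin d)) :=
    fun x => (WithLp.equiv 2 _).symm (fun k => Real.sqrt (1 / π k) • x k) with hΦ
  have hnormV : ∀ x : Fin n → EuclideanSpace ℝ (Fin d),
      Real.sqrt (∑ k, (1 / π k) * ‖x k‖ ^ 2) = ‖Φ x‖ := by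
    intro x
    rw [pilp_norm_sqrt]
    congr 1
    refine Finset.sum_congr rfl (fun k _ => ?_)
    have hk : (0:ℝ) ≤ 1 / π k := le_of_lt (one_div_pos.mpr (hπ_pos k))
    simp only [hΦ, WithLp.equiv_symm_apply, PiLp.toLp_apply]
    rw [norm_smul, Real.norm_eq_abs, abs_of_nonneg (Real.sqrt_nonneg _), mul_pow,
      Real.sq_sqrt hk]
  have hA : Real.sqrt (∑ k, (1 / π k) * ‖y k‖ ^ 2) = ‖Φ y‖ := hnormV y
  have hB : Real.sqrt (∑ k, (1 / π k) * ‖g k‖ ^ 2) = ‖Φ g‖ := hnormV g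
  have hdiffel : Φ (fun k => y k - α • g k) = Φ y - α • Φ g := by
    simp only [hΦ]
    refine PiLp.ext (fun k => ?_)
    show Real.sqrt (1 / π k) • (y k - α • g k)
        = Real.sqrt (1 / π k) • y k - α • (Real.sqrt (1 / π k) • g k)
    rw [smul_sub, smul_comm]
  have key : ‖Φ y‖ ≤ ρ * ‖Φ y - α • Φ g‖ := by
    have h := hρ_op (fun j => y j - α • g j)
    calc ‖Φ y‖ = Real.sqrt (∑ k, (1 / π k) * ‖y k‖ ^ 2) := hA.symm
      _ = Real.sqrt (∑ k, (1 / π k) * ‖∑ j, (W k j - π k) • (y j - α • g j)‖ ^ 2) := by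
          congr 1
          exact Finset.sum_congr rfl (fun k _ => by rw [hid k])
      _ ≤ ρ * Real.sqrt (∑ k, (1 / π k) * ‖y k - α • g k‖ ^ 2) := h
      _ = ρ * ‖Φ y - α • Φ g‖ := by rw [hnormV (fun k => y k - α • g k), hdiffel]
  have htri : ‖Φ y - α • Φ g‖ ≤ ‖Φ y‖ + α * ‖Φ g‖ := by
    calc ‖Φ y - α • Φ g‖ ≤ ‖Φ y‖ + ‖α • Φ g‖ := norm_sub_le _ _
      _ = ‖Φ y‖ + α * ‖Φ g‖ := by rw [norm_smul, Real.norm_eq_abs, abs_of_pos hα]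
  have hAn : (0:ℝ) ≤ ‖Φ y‖ := norm_nonneg _
  have hBn : (0:ℝ) ≤ ‖Φ g‖ := norm_nonneg _
  have hfin : ‖Φ y‖ ≤ (α * ρ / (1 - ρ)) * ‖Φ g‖ := by
    rw [div_mul_eq_mul_div, le_div_iff₀ (by linarith)]
    nlinarith [key, htri, mul_le_mul_of_nonneg_left htri hρ0]
  calc Real.sqrt (∑ k, (1 / π k) * ‖wα k - π k • T‖ ^ 2)
      = ‖Φ y‖ := hA
    _ ≤ (α * ρ / (1 - ρ)) * ‖Φ g‖ := hfin
    _ = (α * ρ / (1 - ρ)) * Real.sqrt (∑ k, (1 / π k) * ‖g k‖ ^ 2) := by rw [hB]
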